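/- Let (Ω₁, μ₁), (Ω₂, μ₂), (Ω₃, μ₃) be σ-finite measure spaces, φ ∈ L^∞(Ω₁ × Ω₂ × Ω₃), K₁ ∈ L²(Ω₁ × Ω₂), and K₂ ∈ L²(Ω₂ × Ω₃). Define Λ(φ)(K₁, K₂)(t₁, t₃) = ∫_{Ω₂} φ(t₁, t₂, t₃) K₁(t₁, t₂) K₂(t₂, t₃) dμ₂(t₂). Then Λ(φ)(K₁, K₂) ∈ L²(Ω₁ × Ω₃) and ‖Λ(φ)(K₁, K₂)‖_{L²} ≤ ‖φ‖_∞ ‖K₁‖_{L²} ‖K₂‖_{L²}. -/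

import Mathlib

open MeasureTheory
open scoped ENNReal

lemma aux_L2 {δ : Type*} [MeasurableSpace δ] (μ : Measure δ) (h : δ → ℂ) :
    eLpNorm h 2 μ = (∫⁻ x, (‖h x‖₊ : ℝ≥0∞) ^ 2 ∂μ) ^ (1/2 : ℝ) := by
  rw [eLpNorm_eq_lintegral_rpow_enorm_toReal (by norm_num) (by norm_num)]
  simp [ENNReal.rpow_two]
  rfl

/-- For σ-finite measure spaces, `φ ∈ L^∞(Ω₁ × Ω₂ × Ω₃)`,
`K₁ ∈ L²(Ω₁ × Ω₂)` and `K₂ ∈ L²(Ω₂ × Ω₃)`, the function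
`Λ(φ)(K₁,K₂)(t₁,t₃) = ∫ φ(t₁,t₂,t₃) K₁(t₁,t₂) K₂(t₂,t₃) dμ₂(t₂)`
belongs to `L²(Ω₁ × Ω₃)` with `‖Λ(φ)(K₁,K₂)‖₂ ≤ ‖φ‖_∞ ‖K₁‖₂ ‖K₂‖₂`. -/
theorem stmt_2
    {Ω₁ Ω₂ Ω₃ : Type*} [MeasurableSpace Ω₁] [MeasurableSpace Ω₂] [MeasurableSpace Ω₃]
    (μ₁ : Measure Ω₁) (μ₂ : Measure Ω₂) (μ₃ : Measure Ω₃)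
    [SigmaFinite μ₁] [SigmaFinite μ₂] [SigmaFinite μ₃]
    (φ : Ω₁ × Ω₂ × Ω₃ → ℂ) (hφ : MemLp φ ⊤ (μ₁.prod (μ₂.prod μ₃)))
    (K₁ : Ω₁ × Ω₂ → ℂ) (hK₁ : MemLp K₁ 2 (μ₁.prod μ₂))
    (K₂ : Ω₂ × Ω₃ → ℂ) (hK₂ : MemLp K₂ 2 (μ₂.prod μ₃)) :
    MemLp (fun p : Ω₁ × Ω₃ => ∫ t₂, φ (p.1, t₂, p.2) * K₁ (p.1, t₂) * K₂ (t₂, p.2) ∂μ₂)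
        2 (μ₁.prod μ₃) ∧
      eLpNorm (fun p : Ω₁ × Ω₃ => ∫ t₂, φ (p.1, t₂, p.2) * K₁ (p.1, t₂) * K₂ (t₂, p.2) ∂μ₂)
          2 (μ₁.prod μ₃)
        ≤ eLpNormEssSup φ (μ₁.prod (μ₂.prod μ₃)) * eLpNorm K₁ 2 (μ₁.prod μ₂) *
            eLpNorm K₂ 2 (μ₂.prod μ₃) := by
  obtain ⟨f, hf_sm, hf_ae⟩ := hφ.1
  obtain ⟨g₁, hg₁_sm, hg₁_ae⟩ := hK₁.1
  obtain ⟨g₂, hg₂_sm, hg₂_ae⟩ := hK₂.1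
  -- measure preserving rearrangement
  have hm : MeasurePreserving (fun q : (Ω₁ × Ω₃) × Ω₂ => (q.1.1, q.2, q.1.2))
      ((μ₁.prod μ₃).prod μ₂) (μ₁.prod (μ₂.prod μ₃)) := by
    have h := ((measurePreserving_prodAssoc μ₁ μ₂ μ₃).comp
      (((Measure.measurePreserving_swap (μ := μ₂) (ν := μ₁)).prod
          (MeasurePreserving.id μ₃)).comp
        (((measurePreserving_prodAssoc μ₂ μ₁ μ₃).symm _).comp
          (Measure.measurePreserving_swap (μ := μ₁.prod μ₃) (ν := μ₂)))))
    convert h using 1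
    funext q; rfl
  -- the measurable version of the kernel
  set F : (Ω₁ × Ω₃) × Ω₂ → ℂ := fun q => f (q.1.1, q.2, q.1.2) * g₁ (q.1.1, q.2) * g₂ (q.2, q.1.2)
    with hF_def
  have hπ : Measurable (fun q : (Ω₁ × Ω₃) × Ω₂ => (q.1.1, q.2, q.1.2)) := hm.measurable
  have hπ₁ : Measurable (fun q : (Ω₁ × Ω₃) × Ω₂ => (q.1.1, q.2)) :=
    (measurable_fst.comp measurable_fst).prodMk measurable_snd
  have hπ₂ : Measurable (fun q : (Ω₁ × Ω₃) × Ω₂ => (q.2, q.1.2)) :=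
    measurable_snd.prodMk (measurable_snd.comp measurable_fst)
  have hF_sm : StronglyMeasurable F :=
    (((hf_sm.comp_measurable hπ).mul (hg₁_sm.comp_measurable hπ₁)).mul
      (hg₂_sm.comp_measurable hπ₂))
  set Λ' : Ω₁ × Ω₃ → ℂ := fun p => ∫ t₂, F (p, t₂) ∂μ₂ with hΛ'_def
  have hΛ'_sm : StronglyMeasurable Λ' := hF_sm.integral_prod_right'
  -- a.e. equality of the original function with Λ'
  have hφ_slice : ∀ᵐ p ∂(μ₁.prod μ₃), ∀ᵐ t₂ ∂μ₂, φ (p.1, t₂, p.2) = f (p.1, t₂, p.2) := by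
    have := hm.quasiMeasurePreserving.ae hf_ae
    exact Measure.ae_ae_of_ae_prod this
  have hK₁_slice : ∀ᵐ p ∂(μ₁.prod μ₃), ∀ᵐ t₂ ∂μ₂, K₁ (p.1, t₂) = g₁ (p.1, t₂) :=
    Measure.quasiMeasurePreserving_fst.ae (Measure.ae_ae_of_ae_prod hg₁_ae)
  have hK₂_slice : ∀ᵐ p ∂(μ₁.prod μ₃), ∀ᵐ t₂ ∂μ₂, K₂ (t₂, p.2) = g₂ (t₂, p.2) := by
    have h0 : ∀ᵐ q ∂(μ₃.prod μ₂), K₂ (q.2, q.1) = g₂ (q.2, q.1) :=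
      (Measure.measurePreserving_swap (μ := μ₃) (ν := μ₂)).quasiMeasurePreserving.ae hg₂_ae
    exact Measure.quasiMeasurePreserving_snd.ae (Measure.ae_ae_of_ae_prod h0)
  have heq : (fun p : Ω₁ × Ω₃ => ∫ t₂, φ (p.1, t₂, p.2) * K₁ (p.1, t₂) * K₂ (t₂, p.2) ∂μ₂)
      =ᵐ[μ₁.prod μ₃] Λ' := by
    filter_upwards [hφ_slice, hK₁_slice, hK₂_slice] with p h1 h2 h3
    refine integral_congr_ae ?_
    filter_upwards [h1, h2, h3] with t₂ e1 e2 e3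
    simp [hF_def, e1, e2, e3]
  -- set up the quantities
  set C := eLpNormEssSup φ (μ₁.prod (μ₂.prod μ₃)) with hC_def
  have hCf : eLpNormEssSup f (μ₁.prod (μ₂.prod μ₃)) = C := (eLpNormEssSup_congr_ae hf_ae).symm
  have hC_ae : ∀ᵐ x ∂(μ₁.prod (μ₂.prod μ₃)), (‖f x‖₊ : ℝ≥0∞) ≤ C := by
    simpa [hCf, enorm_eq_nnnorm] using ae_le_eLpNormEssSup (f := f) (μ := μ₁.prod (μ₂.prod μ₃))
  have hC_slice : ∀ᵐ p ∂(μ₁.prod μ₃), ∀ᵐ t₂ ∂μ₂, (‖f (p.1, t₂, p.2)‖₊ : ℝ≥0∞) ≤ C :=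
    Measure.ae_ae_of_ae_prod (hm.quasiMeasurePreserving.ae hC_ae)
  have hCfin : C < ⊤ := by
    have := hφ.2
    rwa [eLpNorm_exponent_top] at this
  set A : Ω₁ → ℝ≥0∞ := fun t₁ => ∫⁻ t₂, (‖g₁ (t₁, t₂)‖₊ : ℝ≥0∞) ^ 2 ∂μ₂ with hA_def
  set B : Ω₃ → ℝ≥0∞ := fun t₃ => ∫⁻ t₂, (‖g₂ (t₂, t₃)‖₊ : ℝ≥0∞) ^ 2 ∂μ₂ with hB_def
  have hA_meas : Measurable A :=
    (hg₁_sm.measurable.enorm.pow_const 2).lintegral_prod_right'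
  have hB_meas : Measurable B := by
    have : Measurable fun z : Ω₃ × Ω₂ => (‖g₂ (z.2, z.1)‖₊ : ℝ≥0∞) ^ 2 :=
      ((hg₂_sm.measurable.comp measurable_swap).enorm.pow_const 2)
    exact this.lintegral_prod_right'
  -- pointwise bound
  have hpt : ∀ᵐ p ∂(μ₁.prod μ₃),
      (‖Λ' p‖₊ : ℝ≥0∞) ^ 2 ≤ C ^ 2 * (A p.1 * B p.2) := by
    filter_upwards [hC_slice] with p hp
    have h1 : (‖Λ' p‖₊ : ℝ≥0∞) ≤ ∫⁻ t₂, ‖F (p, t₂)‖₊ ∂μ₂ :=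
      enorm_integral_le_lintegral_enorm _
    have h2 : (∫⁻ t₂, (‖F (p, t₂)‖₊ : ℝ≥0∞) ∂μ₂)
        ≤ C * ∫⁻ t₂, (‖g₁ (p.1, t₂)‖₊ : ℝ≥0∞) * ‖g₂ (t₂, p.2)‖₊ ∂μ₂ := by
      calc (∫⁻ t₂, (‖F (p, t₂)‖₊ : ℝ≥0∞) ∂μ₂)
          ≤ ∫⁻ t₂, C * ((‖g₁ (p.1, t₂)‖₊ : ℝ≥0∞) * ‖g₂ (t₂, p.2)‖₊) ∂μ₂ := by
            refine lintegral_mono_ae ?_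
            filter_upwards [hp] with t₂ ht₂
            simp only [hF_def, nnnorm_mul, ENNReal.coe_mul]
            calc (‖f (p.1, t₂, p.2)‖₊ : ℝ≥0∞) * ‖g₁ (p.1, t₂)‖₊ * ‖g₂ (t₂, p.2)‖₊
                ≤ C * ‖g₁ (p.1, t₂)‖₊ * ‖g₂ (t₂, p.2)‖₊ := by gcongr
              _ = C * ((‖g₁ (p.1, t₂)‖₊ : ℝ≥0∞) * ‖g₂ (t₂, p.2)‖₊) := by ring
        _ = C * ∫⁻ t₂, (‖g₁ (p.1, t₂)‖₊ : ℝ≥0∞) * ‖g₂ (t₂, p.2)‖₊ ∂μ₂ :=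
            lintegral_const_mul' _ _ hCfin.ne
    have h3 : (∫⁻ t₂, (‖g₁ (p.1, t₂)‖₊ : ℝ≥0∞) * ‖g₂ (t₂, p.2)‖₊ ∂μ₂)
        ≤ (A p.1) ^ (1/2 : ℝ) * (B p.2) ^ (1/2 : ℝ) := by
      have hconj : Real.HolderConjugate 2 2 := ⟨by norm_num, by norm_num, by norm_num⟩
      have := ENNReal.lintegral_mul_le_Lp_mul_Lq μ₂ hconj
        ((hg₁_sm.measurable.comp (measurable_prodMk_left (x := p.1))).enorm.aemeasurable)
        ((hg₂_sm.measurable.comp (measurable_prodMk_right (y := p.2))).enorm.aemeasurable)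
      simpa [hA_def, hB_def, ENNReal.rpow_two, enorm_eq_nnnorm] using this
    calc (‖Λ' p‖₊ : ℝ≥0∞) ^ 2 ≤ (C * ((A p.1) ^ (1/2 : ℝ) * (B p.2) ^ (1/2 : ℝ))) ^ 2 := by
          gcongr
          exact h1.trans (h2.trans (by gcongr))
      _ = C ^ 2 * (A p.1 * B p.2) := by
          rw [mul_pow, mul_pow, ← ENNReal.rpow_two ((A p.1) ^ (1/2:ℝ)),
            ← ENNReal.rpow_two ((B p.2) ^ (1/2:ℝ)), ← ENNReal.rpow_mul, ← ENNReal.rpow_mul]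
          norm_num
  -- integrate the bound
  set I₁ := ∫⁻ z, (‖g₁ z‖₊ : ℝ≥0∞) ^ 2 ∂(μ₁.prod μ₂) with hI₁_def
  set I₂ := ∫⁻ z, (‖g₂ z‖₊ : ℝ≥0∞) ^ 2 ∂(μ₂.prod μ₃) with hI₂_def
  have hIA : ∫⁻ t₁, A t₁ ∂μ₁ = I₁ :=
    (lintegral_prod _ (hg₁_sm.measurable.enorm.pow_const 2).aemeasurable).symm
  have hIB : ∫⁻ t₃, B t₃ ∂μ₃ = I₂ :=
    (lintegral_prod_symm _ (hg₂_sm.measurable.enorm.pow_const 2).aemeasurable).symm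
  have htotal : (∫⁻ p, (‖Λ' p‖₊ : ℝ≥0∞) ^ 2 ∂(μ₁.prod μ₃)) ≤ C ^ 2 * (I₁ * I₂) := by
    calc (∫⁻ p, (‖Λ' p‖₊ : ℝ≥0∞) ^ 2 ∂(μ₁.prod μ₃))
        ≤ ∫⁻ p, C ^ 2 * (A p.1 * B p.2) ∂(μ₁.prod μ₃) := lintegral_mono_ae hpt
      _ = C ^ 2 * ∫⁻ p, A p.1 * B p.2 ∂(μ₁.prod μ₃) := lintegral_const_mul _
          ((hA_meas.comp measurable_fst).mul (hB_meas.comp measurable_snd))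
      _ = C ^ 2 * ((∫⁻ t₁, A t₁ ∂μ₁) * ∫⁻ t₃, B t₃ ∂μ₃) := by
          rw [lintegral_prod_mul hA_meas.aemeasurable hB_meas.aemeasurable]
      _ = C ^ 2 * (I₁ * I₂) := by rw [hIA, hIB]
  -- translate to eLpNorms
  have hK₁norm : eLpNorm K₁ 2 (μ₁.prod μ₂) = I₁ ^ (1/2 : ℝ) := by
    rw [eLpNorm_congr_ae hg₁_ae]; exact aux_L2 _ _
  have hK₂norm : eLpNorm K₂ 2 (μ₂.prod μ₃) = I₂ ^ (1/2 : ℝ) := by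
    rw [eLpNorm_congr_ae hg₂_ae]; exact aux_L2 _ _
  have hbound : eLpNorm Λ' 2 (μ₁.prod μ₃) ≤ C * eLpNorm K₁ 2 (μ₁.prod μ₂) *
      eLpNorm K₂ 2 (μ₂.prod μ₃) := by
    rw [aux_L2, hK₁norm, hK₂norm]
    calc (∫⁻ p, (‖Λ' p‖₊ : ℝ≥0∞) ^ 2 ∂(μ₁.prod μ₃)) ^ (1/2 : ℝ)
        ≤ (C ^ 2 * (I₁ * I₂)) ^ (1/2 : ℝ) := by gcongr
      _ = C * I₁ ^ (1/2 : ℝ) * I₂ ^ (1/2 : ℝ) := by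
          rw [ENNReal.mul_rpow_of_nonneg _ _ (by norm_num),
            ENNReal.mul_rpow_of_nonneg _ _ (by norm_num),
            ← ENNReal.rpow_two C, ← ENNReal.rpow_mul]
          norm_num [mul_assoc]
  have hΛnorm : eLpNorm (fun p : Ω₁ × Ω₃ =>
      ∫ t₂, φ (p.1, t₂, p.2) * K₁ (p.1, t₂) * K₂ (t₂, p.2) ∂μ₂) 2 (μ₁.prod μ₃)
      = eLpNorm Λ' 2 (μ₁.prod μ₃) := eLpNorm_congr_ae heq
  constructor
  · refine ⟨⟨Λ', hΛ'_sm, heq⟩, ?_⟩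
    rw [hΛnorm]
    refine lt_of_le_of_lt hbound ?_
    exact ENNReal.mul_lt_top (ENNReal.mul_lt_top hCfin hK₁.2) hK₂.2
  · rw [hΛnorm]; exact hbound
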